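/- Let k₀ : [0, ∞) → ℝ be continuous, non-increasing, with k₀(s) < 0 for all s, and let F₀ be the solution of F₀'' + k₀F₀ = 0 with F₀(0) = 0, F₀'(0) = 1. Then for all 0 ≤ t ≤ s one has F₀(s) ≥ F₀(t)·cosh(√(−k₀(t))·(s − t)). -/

import Mathlib

open Set Real Filter Topology

private lemma mono_aux_Icc {f f' : ℝ → ℝ} {a b : ℝ}
    (hf : ∀ x ∈ Set.Icc a b, HasDerivWithinAt f (f' x) (Set.Ici a) x)
    (h0 : ∀ x ∈ Set.Ioo a b, 0 ≤ f' x) : MonotoneOn f (Set.Icc a b) := by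
  apply monotoneOn_of_deriv_nonneg (convex_Icc a b)
    (fun x hx => ((hf x hx).continuousWithinAt).mono (fun y hy => hy.1))
  · rw [interior_Icc]; intro x hx
    exact ((hf x ⟨le_of_lt hx.1, le_of_lt hx.2⟩).hasDerivAt
      (Ici_mem_nhds hx.1)).differentiableAt.differentiableWithinAt
  · rw [interior_Icc]; intro x hx
    rw [((hf x ⟨le_of_lt hx.1, le_of_lt hx.2⟩).hasDerivAt (Ici_mem_nhds hx.1)).deriv]
    exact h0 x hx

private lemma mono_aux_Ici {f f' : ℝ → ℝ} {a : ℝ}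
    (hf : ∀ x ∈ Set.Ici a, HasDerivWithinAt f (f' x) (Set.Ici a) x)
    (h0 : ∀ x ∈ Set.Ioi a, 0 ≤ f' x) : MonotoneOn f (Set.Ici a) := by
  apply monotoneOn_of_deriv_nonneg (convex_Ici a)
    (fun x hx => (hf x hx).continuousWithinAt)
  · rw [interior_Ici]; intro x hx
    exact ((hf x (Set.mem_Ici.mpr (le_of_lt hx))).hasDerivAt
      (Ici_mem_nhds hx)).differentiableAt.differentiableWithinAt
  · rw [interior_Ici]; intro x hx
    rw [((hf x (Set.mem_Ici.mpr (le_of_lt hx))).hasDerivAt (Ici_mem_nhds hx)).deriv]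
    exact h0 x hx

/-- Growth estimate in the proof of Lemma 1 (iii): if `k₀ < 0` is continuous and
non-increasing and `F₀` solves `F₀'' + k₀F₀ = 0`, `F₀(0)=0`, `F₀'(0)=1`, then for
`0 ≤ t ≤ s` one has `F₀(s) ≥ F₀(t) cosh(√(-k₀(t)) (s - t))`. -/
theorem stmt_9 (k₀ F₀ F₀' F₀'' : ℝ → ℝ)
    (hk₀_cont : ContinuousOn k₀ (Set.Ici 0))
    (hk₀_neg : ∀ s ∈ Set.Ici (0 : ℝ), k₀ s < 0)
    (hk₀_mono : ∀ s ∈ Set.Ici (0 : ℝ), ∀ t ∈ Set.Ici (0 : ℝ), s ≤ t → k₀ t ≤ k₀ s)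
    (hF₀' : ∀ s ∈ Set.Ici (0 : ℝ), HasDerivWithinAt F₀ (F₀' s) (Set.Ici 0) s)
    (hF₀'' : ∀ s ∈ Set.Ici (0 : ℝ), HasDerivWithinAt F₀' (F₀'' s) (Set.Ici 0) s)
    (hF₀''_cont : ContinuousOn F₀'' (Set.Ici 0))
    (hODE₀ : ∀ s ∈ Set.Ici (0 : ℝ), F₀'' s + k₀ s * F₀ s = 0)
    (hF₀0 : F₀ 0 = 0) (hF₀'0 : F₀' 0 = 1) :
    ∀ t ∈ Set.Ici (0 : ℝ), ∀ s, t ≤ s →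
      F₀ t * Real.cosh (Real.sqrt (-(k₀ t)) * (s - t)) ≤ F₀ s := by
  have hF₀cont : ContinuousOn F₀ (Set.Ici 0) := fun s hs => (hF₀' s hs).continuousWithinAt
  have hF₀'cont : ContinuousOn F₀' (Set.Ici 0) := fun s hs => (hF₀'' s hs).continuousWithinAt
  -- Step 1: F₀ ≥ 0 on Ici 0
  have hpos : ∀ s ∈ Set.Ici (0 : ℝ), 0 ≤ F₀ s := by
    by_contra hcon
    push_neg at hcon
    obtain ⟨s₀, hs₀, hneg⟩ := hcon
    set B := {s : ℝ | 0 ≤ s ∧ F₀ s < 0} with hBdef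
    have hBne : B.Nonempty := ⟨s₀, hs₀, hneg⟩
    have hBbd : BddBelow B := ⟨0, fun x hx => hx.1⟩
    set T := sInf B with hTdef
    have hT0 : 0 ≤ T := le_csInf hBne fun x hx => hx.1
    have hIco : ∀ u ∈ Set.Ico (0:ℝ) T, 0 ≤ F₀ u := fun u hu =>
      le_of_not_gt fun hlt => absurd (csInf_le hBbd ⟨hu.1, hlt⟩) (not_le.2 hu.2)
    -- F₀ T ≤ 0 by continuity and approach from the right
    have hFT : F₀ T ≤ 0 := by
      by_contra hFT
      push_neg at hFT
      obtain ⟨δ, hδ, hball⟩ := (Metric.continuousWithinAt_iff.mp (hF₀cont T hT0)) (F₀ T) hFT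
      obtain ⟨u, huB, hult⟩ := Real.lt_sInf_add_pos hBne hδ
      have hTu : T ≤ u := csInf_le hBbd huB
      have hdist : dist u T < δ := by
        rw [Real.dist_eq, abs_of_nonneg (by linarith)]; linarith
      have := hball huB.1 hdist
      rw [Real.dist_eq] at this
      have := abs_lt.mp this
      linarith [huB.2]
    -- F₀'' ≥ 0 on [0,T), so F₀' ≥ 1 on [0,T], so F₀ T ≥ T
    have hF''nn : ∀ u ∈ Set.Ioo (0:ℝ) T, 0 ≤ F₀'' u := by
      intro u hu
      have hu0 : (0:ℝ) ≤ u := le_of_lt hu.1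
      have hode := hODE₀ u hu0
      have hk := hk₀_neg u hu0
      have hF := hIco u ⟨hu0, hu.2⟩
      nlinarith
    have hF'mono : MonotoneOn F₀' (Set.Icc 0 T) :=
      mono_aux_Icc (fun x hx => hF₀'' x hx.1) hF''nn
    have hF'ge : ∀ u ∈ Set.Icc (0:ℝ) T, 1 ≤ F₀' u := by
      intro u hu
      have := hF'mono ⟨le_refl 0, hT0⟩ hu hu.1
      rwa [hF₀'0] at this
    have hFmono : MonotoneOn (fun u => F₀ u - u) (Set.Icc 0 T) := by
      apply mono_aux_Icc (f' := fun u => F₀' u - 1)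
      · intro x hx
        exact ((hF₀' x hx.1).sub (hasDerivWithinAt_id x _))
      · intro x hx
        have := hF'ge x ⟨le_of_lt hx.1, le_of_lt hx.2⟩
        linarith
    have hFTgeT : T ≤ F₀ T := by
      have := hFmono ⟨le_refl 0, hT0⟩ ⟨hT0, le_refl T⟩ hT0
      simp [hF₀0] at this
      linarith
    -- hence T = 0 and F₀ T = 0
    have hTeq : T = 0 := le_antisymm (by linarith) hT0
    -- slope argument at 0
    have hslope : Filter.Tendsto (slope F₀ 0) (𝓝[Set.Ici 0 \ {0}] 0) (𝓝 1) := by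
      have := (hasDerivWithinAt_iff_tendsto_slope).mp (hF₀' 0 Set.self_mem_Ici)
      rwa [hF₀'0] at this
    have hev : ∀ᶠ u in 𝓝[Set.Ici 0 \ {0}] 0, 0 < slope F₀ 0 u :=
      hslope.eventually (eventually_gt_nhds one_pos)
    rw [eventually_nhdsWithin_iff] at hev
    obtain ⟨δ, hδ, hball⟩ := Metric.eventually_nhds_iff.mp hev
    obtain ⟨u, huB, hult⟩ := Real.lt_sInf_add_pos hBne hδ
    rw [← hTdef, hTeq, zero_add] at hult
    have hu0 : 0 < u := by
      rcases lt_or_eq_of_le huB.1 with h | h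
      · exact h
      · exfalso
        have h2 : F₀ u < 0 := huB.2
        rw [← h, hF₀0] at h2
        exact lt_irrefl 0 h2
    have hdist : dist u 0 < δ := by
      rw [Real.dist_eq, sub_zero, abs_of_pos hu0]; exact hult
    have hsl := hball hdist ⟨le_of_lt hu0, ne_of_gt hu0⟩
    rw [slope_def_field, hF₀0] at hsl
    have : F₀ u / u > 0 := by simpa [div_eq_iff] using hsl
    have : 0 < F₀ u := by
      have := mul_pos this hu0
      rwa [div_mul_cancel₀ _ (ne_of_gt hu0)] at this
    linarith [huB.2]
  -- Step 2: F₀'' ≥ 0, F₀' monotone, F₀' ≥ 1 on Ici 0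
  have hF''nn : ∀ u ∈ Set.Ici (0:ℝ), 0 ≤ F₀'' u := by
    intro u hu
    have hode := hODE₀ u hu
    have hk := hk₀_neg u hu
    have hF := hpos u hu
    nlinarith
  have hF'mono : MonotoneOn F₀' (Set.Ici 0) :=
    mono_aux_Ici hF₀'' (fun x hx => hF''nn x (Set.mem_Ici.mpr (le_of_lt hx)))
  have hF'ge : ∀ u ∈ Set.Ici (0:ℝ), 1 ≤ F₀' u := by
    intro u hu
    have := hF'mono (Set.mem_Ici.mpr (le_refl 0)) hu hu
    rwa [hF₀'0] at this
  -- Main comparison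
  intro t ht s hts
  set a := Real.sqrt (-(k₀ t)) with hadef
  have hknt : 0 < -(k₀ t) := by linarith [hk₀_neg t ht]
  have ha2 : a * a = -(k₀ t) := Real.mul_self_sqrt (le_of_lt hknt)
  set g : ℝ → ℝ := fun u => Real.cosh (a * (u - t)) with hgdef
  set g' : ℝ → ℝ := fun u => Real.sinh (a * (u - t)) * a with hg'def
  have hg : ∀ u, HasDerivAt g (g' u) u := by
    intro u
    have h1 : HasDerivAt (fun u : ℝ => a * (u - t)) a u := by
      simpa using ((hasDerivAt_id u).sub_const t).const_mul a
    exact (Real.hasDerivAt_cosh (a * (u - t))).comp u h1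
  have hg'd : ∀ u, HasDerivAt g' (Real.cosh (a * (u - t)) * a * a) u := by
    intro u
    have h1 : HasDerivAt (fun u : ℝ => a * (u - t)) a u := by
      simpa using ((hasDerivAt_id u).sub_const t).const_mul a
    exact ((Real.hasDerivAt_sinh (a * (u - t))).comp u h1).mul_const a
  have hgpos : ∀ u, 0 < g u := fun u => Real.cosh_pos _
  have hsub : Set.Ici t ⊆ Set.Ici (0:ℝ) := Set.Ici_subset_Ici.mpr ht
  -- Wronskian W = F₀' g - F₀ g'
  set W : ℝ → ℝ := fun u => F₀' u * g u - F₀ u * g' u with hWdef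
  have hWderiv : ∀ u ∈ Set.Ici t, HasDerivWithinAt W
      (F₀'' u * g u - F₀ u * (Real.cosh (a * (u - t)) * a * a)) (Set.Ici t) u := by
    intro u hu
    have h1 := ((hF₀'' u (hsub hu)).mono hsub).mul ((hg u).hasDerivWithinAt)
    have h2 := ((hF₀' u (hsub hu)).mono hsub).mul ((hg'd u).hasDerivWithinAt)
    have := h1.sub h2
    exact this.congr_deriv (by ring)
  have hWnn : ∀ u ∈ Set.Ioi t, 0 ≤ F₀'' u * g u - F₀ u * (Real.cosh (a * (u - t)) * a * a) := by
    intro u hu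
    have hu0 : (0:ℝ) ≤ u := le_trans ht (le_of_lt hu)
    have hode := hODE₀ u hu0
    have hF : 0 ≤ F₀ u := hpos u hu0
    have hk : k₀ u ≤ k₀ t := hk₀_mono t ht u hu0 (le_of_lt hu)
    have hgval : g u = Real.cosh (a * (u - t)) := rfl
    have hF'' : F₀'' u = -(k₀ u) * F₀ u := by linarith
    have hk₀t : k₀ t = -(a * a) := by linarith
    have key : -(k₀ u) * F₀ u * g u - F₀ u * (Real.cosh (a * (u - t)) * a * a) =
        (k₀ t - k₀ u) * (F₀ u * g u) := by
      rw [hk₀t, hgval]; ring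
    rw [hF'', key]
    exact mul_nonneg (by linarith) (mul_nonneg hF (le_of_lt (hgpos u)))
  have hWmono : MonotoneOn W (Set.Ici t) := mono_aux_Ici hWderiv hWnn
  have hWt : W t = F₀' t := by
    simp [hWdef, hgdef, hg'def]
  have hWnonneg : ∀ u ∈ Set.Ici t, 0 ≤ W u := by
    intro u hu
    have := hWmono (Set.mem_Ici.mpr (le_refl t)) hu hu
    rw [hWt] at this
    linarith [hF'ge t ht]
  -- Quotient Q = F₀ / g is monotone on Ici t
  set Q : ℝ → ℝ := fun u => F₀ u / g u with hQdef
  have hQderiv : ∀ u ∈ Set.Ici t, HasDerivWithinAt Q (W u / (g u)^2) (Set.Ici t) u := by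
    intro u hu
    exact ((hF₀' u (hsub hu)).mono hsub).div ((hg u).hasDerivWithinAt) (ne_of_gt (hgpos u))
  have hQmono : MonotoneOn Q (Set.Ici t) :=
    mono_aux_Ici hQderiv (fun u hu =>
      div_nonneg (hWnonneg u (Set.mem_Ici.mpr (le_of_lt hu))) (sq_nonneg _))
  have hQt : Q t = F₀ t := by
    simp [hQdef, hgdef]
  have hQs : F₀ t ≤ Q s := by
    have := hQmono (Set.mem_Ici.mpr (le_refl t)) hts hts
    rwa [hQt] at this
  have hgs : g s ≠ 0 := ne_of_gt (hgpos s)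
  calc F₀ t * Real.cosh (Real.sqrt (-(k₀ t)) * (s - t)) = F₀ t * g s := rfl
    _ ≤ Q s * g s := mul_le_mul_of_nonneg_right hQs (le_of_lt (hgpos s))
    _ = F₀ s := by rw [hQdef]; exact div_mul_cancel₀ _ hgs
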